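/- arXiv:2510.19740 — 3 statements merged into one kernel-verified Lean document; each statement's English description precedes it below -/
import Mathlib

section
/- For all integers m ≥ 1 and n ≥ 1, the shifted Ramanujan sum satisfies c_m(n+1) = (μ(m)/φ(m))·c_m(n) + (1/φ(m))·Σ_{χ mod m, χ ≠ χ₀} τ(χ)·c'_{χ̄}(n), where the sum is over non-principal Dirichlet characters mod m. -/
open scoped Classical
open ArithmeticFunction

noncomputable def eC (x : ℂ) : ℂ := Complex.exp (2 * Real.pi * Complex.I * x)

/-- Ramanujan sum `c_m(n) = ∑_{b mod m, (b,m)=1} e(bn/m)`. -/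
noncomputable def ramanujanSum (m n : ℕ) : ℂ :=
  ∑ b ∈ (Finset.range m).filter (fun b => Nat.Coprime b m), eC ((b : ℂ) * n / m)

/-- Gauss sum `τ(χ) = ∑_{b mod m} χ(b) e(b/m)`. -/
noncomputable def gaussSum' {m : ℕ} (χ : DirichletCharacter ℂ m) : ℂ :=
  ∑ b ∈ Finset.range m, χ b * eC ((b : ℂ) / m)

/-- `c'_g(n) = ∑_{b mod m, (b,m)=1} g(b) e(bn/m)` for a weight `g`. -/
noncomputable def cCharF (m : ℕ) (g : ℕ → ℂ) (n : ℕ) : ℂ :=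
  ∑ b ∈ (Finset.range m).filter (fun b => Nat.Coprime b m), g b * eC ((b : ℂ) * n / m)

lemma eC_add (x y : ℂ) : eC (x + y) = eC x * eC y := by
  simp [eC, mul_add, Complex.exp_add]

noncomputable def S0 (k : ℕ) : ℂ :=
  ∑ b ∈ (Finset.range k).filter (fun b => Nat.Coprime b k), eC ((b : ℂ) / k)

lemma fullSum (n : ℕ) (hn : 0 < n) :
    ∑ b ∈ Finset.range n, eC ((b : ℂ) / n) = if n = 1 then 1 else 0 := by
  rcases eq_or_lt_of_le (show 1 ≤ n from hn) with h1 | h1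
  · simp [← h1, eC]
  · rw [if_neg (by omega)]
    have hprim : IsPrimitiveRoot (eC (1 / n)) n := by
      have := Complex.isPrimitiveRoot_exp n (by omega)
      have he : eC (1 / (n : ℂ)) = Complex.exp (2 * Real.pi * Complex.I / n) := by
        unfold eC; ring_nf
      rwa [he]
    have key : ∀ b : ℕ, eC ((b : ℂ) / n) = eC (1 / n) ^ b := by
      intro b
      unfold eC
      rw [← Complex.exp_nat_mul]
      ring_nf
    simp_rw [key]
    exact hprim.geom_sum_eq_zero h1


lemma fiber_sum (n d : ℕ) (hd : d ∈ n.divisors) :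
    ∑ b ∈ (Finset.range n).filter (fun b => n.gcd b = d), eC ((b : ℂ) / n)
      = S0 (n / d) := by
  obtain ⟨hdvd, hn0⟩ := Nat.mem_divisors.mp hd
  have hdpos : 0 < d := Nat.pos_of_ne_zero (by rintro rfl; exact hn0 (Nat.eq_zero_of_zero_dvd hdvd))
  have hnd : n / d * d = n := Nat.div_mul_cancel hdvd
  unfold S0
  refine Finset.sum_nbij' (fun b => b / d) (fun c => c * d) ?_ ?_ ?_ ?_ ?_
  · intro b hb
    simp only [Finset.mem_filter, Finset.mem_range] at hb ⊢
    obtain ⟨hblt, hbg⟩ := hb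
    have hdb : d ∣ b := hbg ▸ Nat.gcd_dvd_right n b
    refine ⟨Nat.div_lt_div_of_lt_of_dvd hdvd hblt, ?_⟩
    have := Nat.coprime_div_gcd_div_gcd (m := n) (n := b) (hbg ▸ hdpos)
    rw [hbg] at this
    exact this.symm
  · intro c hc
    simp only [Finset.mem_filter, Finset.mem_range] at hc ⊢
    obtain ⟨hclt, hcc⟩ := hc
    constructor
    · calc c * d < n / d * d := (Nat.mul_lt_mul_right hdpos).mpr hclt
        _ = n := hnd
    · conv_lhs => rw [← hnd]
      rw [Nat.gcd_mul_right, Nat.Coprime.gcd_eq_one hcc.symm, one_mul]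
  · intro b hb
    simp only [Finset.mem_filter, Finset.mem_range] at hb
    have hdb : d ∣ b := hb.2 ▸ Nat.gcd_dvd_right n b
    exact Nat.div_mul_cancel hdb
  · intro c _
    exact Nat.mul_div_cancel c hdpos
  · intro b hb
    simp only [Finset.mem_filter, Finset.mem_range] at hb
    have hdb : d ∣ b := hb.2 ▸ Nat.gcd_dvd_right n b
    congr 1
    rw [Nat.cast_div hdb (by exact_mod_cast hdpos.ne'), Nat.cast_div hdvd (by exact_mod_cast hdpos.ne')]
    have hd0 : (d : ℂ) ≠ 0 := by exact_mod_cast hdpos.ne'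
    have hn0' : (n : ℂ) ≠ 0 := by exact_mod_cast hn0
    field_simp

lemma claim1 : ∀ n > 0, ∑ d ∈ n.divisors, S0 d = if n = 1 then (1:ℂ) else 0 := by
  intro n hn
  have h2 := Finset.sum_fiberwise_of_maps_to (s := Finset.range n)
    (g := fun b => n.gcd b) (t := n.divisors)
    (fun b _ => Nat.mem_divisors.mpr ⟨Nat.gcd_dvd_left n b, hn.ne'⟩)
    (fun b => eC ((b : ℂ) / n))
  rw [← fullSum n hn, ← h2, ← Nat.sum_div_divisors n S0]
  exact Finset.sum_congr rfl (fun d hd => (fiber_sum n d hd).symm)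

lemma S0_eq_moebius (m : ℕ) (hm : 0 < m) : S0 m = (moebius m : ℤ) := by
  have h := (sum_eq_iff_sum_mul_moebius_eq (f := S0)
    (g := fun n => if n = 1 then (1:ℂ) else 0)).mp claim1 m hm
  rw [← h]
  rw [Finset.sum_eq_single_of_mem (⟨m, 1⟩ : ℕ × ℕ)
    (Nat.mem_divisorsAntidiagonal.mpr ⟨mul_one m, hm.ne'⟩)]
  · simp
  · rintro ⟨d, e⟩ hde hne
    obtain ⟨hmul, -⟩ := Nat.mem_divisorsAntidiagonal.mp hde
    rcases eq_or_ne e 1 with rfl | he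
    · simp only [mul_one] at hmul; subst hmul; exact absurd rfl hne
    · simp [he]

lemma conj_char {m : ℕ} (χ : DirichletCharacter ℂ m) {b : ZMod m} (hb : IsUnit b) :
    starRingEnd ℂ (χ b) = χ b⁻¹ := by
  have h1 : χ b⁻¹ * χ b = 1 := by rw [← map_mul, ZMod.inv_mul_of_unit b hb, map_one]
  have h2 : starRingEnd ℂ (χ b) = (χ b)⁻¹ := by
    rw [← MulChar.inv_apply_eq_inv' χ b, ← MulChar.star_apply']
    rfl
  rw [h2, eq_comm]
  exact eq_inv_of_mul_eq_one_left h1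

lemma gauss_eq_filter {m : ℕ} [NeZero m] (χ : DirichletCharacter ℂ m) :
    gaussSum' χ = ∑ b ∈ (Finset.range m).filter (fun b => Nat.Coprime b m),
      χ b * eC ((b : ℂ) / m) := by
  refine (Finset.sum_filter_of_ne fun b _ hne => ?_).symm
  by_contra hcop
  exact hne (by rw [MulChar.map_nonunit χ (by simpa [ZMod.isUnit_iff_coprime] using hcop), zero_mul])

lemma full_sum_chars (m : ℕ) [NeZero m] (n : ℕ) :
    ∑ χ : DirichletCharacter ℂ m,
        gaussSum' χ * cCharF m (fun b => starRingEnd ℂ (χ b)) n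
      = (m.totient : ℂ) * ramanujanSum m (n + 1) := by
  classical
  set F := (Finset.range m).filter (fun b => Nat.Coprime b m) with hF
  have hunit : ∀ b ∈ F, IsUnit ((b : ℕ) : ZMod m) := by
    intro b hb
    rw [ZMod.isUnit_iff_coprime]
    exact (Finset.mem_filter.mp hb).2
  have step1 : ∀ χ : DirichletCharacter ℂ m,
      gaussSum' χ * cCharF m (fun b => starRingEnd ℂ (χ b)) n
        = ∑ a ∈ F, ∑ b ∈ F,
            (χ a * eC ((a : ℂ) / m)) * (starRingEnd ℂ (χ b) * eC ((b : ℂ) * n / m)) := by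
    intro χ
    rw [gauss_eq_filter χ, cCharF, Finset.sum_mul_sum]
  calc ∑ χ : DirichletCharacter ℂ m,
        gaussSum' χ * cCharF m (fun b => starRingEnd ℂ (χ b)) n
      = ∑ a ∈ F, ∑ b ∈ F, ∑ χ : DirichletCharacter ℂ m,
          (χ a * eC ((a : ℂ) / m)) * (starRingEnd ℂ (χ b) * eC ((b : ℂ) * n / m)) := by
        simp_rw [step1]
        rw [Finset.sum_comm]
        exact Finset.sum_congr rfl fun a _ => Finset.sum_comm
    _ = ∑ a ∈ F, ∑ b ∈ F, (eC ((a : ℂ) / m) * eC ((b : ℂ) * n / m)) *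
          (if ((b : ℕ) : ZMod m) = ((a : ℕ) : ZMod m) then (m.totient : ℂ) else 0) := by
        refine Finset.sum_congr rfl fun a ha => Finset.sum_congr rfl fun b hb => ?_
        rw [← DirichletCharacter.sum_char_inv_mul_char_eq ℂ (hunit b hb) ((a : ℕ) : ZMod m),
          Finset.mul_sum]
        refine Finset.sum_congr rfl fun χ _ => ?_
        rw [conj_char χ (hunit b hb)]
        ring
    _ = ∑ b ∈ F, (eC ((b : ℂ) / m) * eC ((b : ℂ) * n / m)) * (m.totient : ℂ) := by
        refine Finset.sum_congr rfl fun a ha => ?_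
        rw [Finset.sum_eq_single a]
        · rw [if_pos rfl]
        · intro b hb hne
          rw [if_neg, mul_zero]
          intro h
          apply hne
          have := congrArg ZMod.val h
          rwa [ZMod.val_cast_of_lt (Finset.mem_range.mp (Finset.mem_filter.mp hb).1),
            ZMod.val_cast_of_lt (Finset.mem_range.mp (Finset.mem_filter.mp ha).1)] at this
        · intro h; exact (h ha).elim
    _ = (m.totient : ℂ) * ramanujanSum m (n + 1) := by
        rw [ramanujanSum, Finset.mul_sum]
        refine Finset.sum_congr rfl fun b hb => ?_
        rw [← eC_add]
        rw [mul_comm]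
        congr 1
        push_cast
        ring

lemma gauss_one {m : ℕ} [NeZero m] :
    gaussSum' (1 : DirichletCharacter ℂ m) = ((moebius m : ℤ) : ℂ) := by
  rw [gauss_eq_filter, ← S0_eq_moebius m (Nat.pos_of_ne_zero (NeZero.ne m))]
  refine Finset.sum_congr rfl fun b hb => ?_
  have hu : IsUnit ((b : ℕ) : ZMod m) := by
    rw [ZMod.isUnit_iff_coprime]; exact (Finset.mem_filter.mp hb).2
  rw [← hu.unit_spec, MulChar.one_apply_coe, one_mul]

lemma cCharF_one {m : ℕ} [NeZero m] (n : ℕ) :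
    cCharF m (fun b => starRingEnd ℂ ((1 : DirichletCharacter ℂ m) b)) n
      = ramanujanSum m n := by
  rw [cCharF, ramanujanSum]
  refine Finset.sum_congr rfl fun b hb => ?_
  have hu : IsUnit ((b : ℕ) : ZMod m) := by
    rw [ZMod.isUnit_iff_coprime]; exact (Finset.mem_filter.mp hb).2
  rw [← hu.unit_spec, MulChar.one_apply_coe, map_one, one_mul]

theorem stmt0 (m : ℕ) [NeZero m] (n : ℕ) (hn : 1 ≤ n) :
    ramanujanSum m (n + 1) =
      ((moebius m : ℤ) / (Nat.totient m : ℂ)) * ramanujanSum m n +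
      (1 / (Nat.totient m : ℂ)) *
        ∑ χ ∈ Finset.univ.filter (fun χ : DirichletCharacter ℂ m => χ ≠ 1),
          gaussSum' χ * cCharF m (fun b => starRingEnd ℂ (χ b)) n := by
  classical
  have htot : (m.totient : ℂ) ≠ 0 := by
    exact_mod_cast (Nat.totient_pos.mpr (Nat.pos_of_ne_zero (NeZero.ne m))).ne'
  have E := full_sum_chars m n
  rw [← Finset.sum_filter_add_sum_filter_not Finset.univ
      (fun χ : DirichletCharacter ℂ m => χ ≠ 1)] at E
  have hone : (Finset.univ.filter (fun χ : DirichletCharacter ℂ m => ¬χ ≠ 1)) = {1} := by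
    simp only [not_not]
    rw [Finset.filter_eq']
    simp
  rw [hone, Finset.sum_singleton, gauss_one, cCharF_one] at E
  rw [eq_comm] at E
  have hE : ramanujanSum m (n + 1) =
      ((∑ χ ∈ Finset.univ.filter (fun χ : DirichletCharacter ℂ m => χ ≠ 1),
          gaussSum' χ * cCharF m (fun b => starRingEnd ℂ (χ b)) n) +
        ((moebius m : ℤ) : ℂ) * ramanujanSum m n) / (m.totient : ℂ) := by
    rw [eq_div_iff htot]
    linear_combination E
  rw [hE]
  ring
end

section
/- For every fixed integer r ≥ 1 and positive integer n, the identity σ_r(n) = ζ(r+1)·n^r·Σ_{m=1}^{∞} c_m(n)/m^{r+1} holds, where the series converges absolutely. -/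
open scoped Classical LSeries.notation
open ArithmeticFunction
open scoped ArithmeticFunction.Moebius

lemma eC_nat_mul (b : ℕ) (x : ℂ) : eC ((b : ℂ) * x) = (eC x) ^ b := by
  rw [eC, eC, ← Complex.exp_nat_mul]; ring_nf

lemma eC_int (k : ℤ) : eC (k : ℂ) = 1 := by
  rw [eC]
  have : 2 * (Real.pi:ℂ) * Complex.I * (k:ℂ) = (k:ℤ) * (2 * Real.pi * Complex.I) := by ring
  rw [this, Complex.exp_int_mul_two_pi_mul_I]

lemma expsum (q n : ℕ) (hq : q ≠ 0) :
    ∑ b ∈ Finset.range q, eC ((b : ℂ) * n / q) = if q ∣ n then (q : ℂ) else 0 := by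
  have hq' : (q : ℂ) ≠ 0 := Nat.cast_ne_zero.mpr hq
  have key : ∀ b : ℕ, eC ((b : ℂ) * n / q) = (eC ((n : ℂ)/q)) ^ b := by
    intro b
    rw [← eC_nat_mul]; ring_nf
  simp_rw [key]
  by_cases h : q ∣ n
  · obtain ⟨k, rfl⟩ := h
    have h1 : eC ((↑(q * k) : ℂ)/q) = 1 := by
      have : ((↑(q * k) : ℂ)/q) = ((k : ℤ) : ℂ) := by push_cast; field_simp
      rw [this, eC_int]
    rw [h1]
    simp
  · rw [if_neg h]
    have hz1 : eC ((n:ℂ)/q) ≠ 1 := by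
      intro hc
      rw [eC, Complex.exp_eq_one_iff] at hc
      obtain ⟨k, hk⟩ := hc
      have h2 : (2 * (Real.pi:ℂ) * Complex.I) ≠ 0 := by
        simp [Real.pi_ne_zero, Complex.I_ne_zero]
      have h3 : (n : ℂ)/q = k := by
        apply mul_left_cancel₀ h2
        rw [hk]; ring
      have h4 : (n : ℂ) = k * q := by
        rw [div_eq_iff hq'] at h3; exact h3
      have h5 : (n : ℤ) = k * q := by exact_mod_cast h4
      have hq0 : (0:ℤ) < (q:ℤ) := by exact_mod_cast Nat.pos_of_ne_zero hq
      have hk0 : 0 ≤ k := by nlinarith [Int.ofNat_nonneg n]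
      refine h ⟨k.toNat, ?_⟩
      zify [Int.toNat_of_nonneg hk0]
      linarith
    have hzq : (eC ((n:ℂ)/q)) ^ q = 1 := by
      rw [← eC_nat_mul]
      have : (q:ℂ) * ((n:ℂ)/q) = ((n:ℤ):ℂ) := by push_cast; field_simp
      rw [this, eC_int]
    rw [geom_sum_eq hz1, hzq]
    simp

lemma musum (k : ℕ) (hk : k ≠ 0) :
    ∑ d ∈ k.divisors, ((μ d : ℤ) : ℂ) = if k = 1 then 1 else 0 := by
  have h := congrArg (fun f : ArithmeticFunction ℂ => f k)
    (coe_moebius_mul_coe_zeta (R := ℂ))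
  simp only [coe_mul_zeta_apply, one_apply, intCoe_apply] at h
  exact h

lemma sum_range_filter_dvd (d m : ℕ) (hd : d ∣ m) (hd0 : d ≠ 0) (f : ℕ → ℂ) :
    ∑ b ∈ (Finset.range m).filter (fun b => d ∣ b), f b
      = ∑ c ∈ Finset.range (m / d), f (d * c) := by
  refine Finset.sum_nbij' (fun b => b / d) (fun c => d * c) ?_ ?_ ?_ ?_ ?_
  · intro b hb
    simp only [Finset.mem_filter, Finset.mem_range] at hb ⊢
    exact Nat.div_lt_div_of_lt_of_dvd hd hb.1
  · intro c hc
    simp only [Finset.mem_filter, Finset.mem_range] at hc ⊢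
    constructor
    · calc d * c < d * (m / d) := mul_lt_mul_of_pos_left hc (Nat.pos_of_ne_zero hd0)
      _ = m := Nat.mul_div_cancel' hd
    · exact Dvd.intro c rfl
  · intro b hb
    simp only [Finset.mem_filter] at hb
    exact Nat.mul_div_cancel' hb.2
  · intro c _
    exact Nat.mul_div_cancel_left c (Nat.pos_of_ne_zero hd0)
  · intro b hb
    simp only [Finset.mem_filter] at hb
    rw [Nat.mul_div_cancel' hb.2]

lemma ramanujanSum_eq (m n : ℕ) (hm : m ≠ 0) :
    ramanujanSum m n
      = ∑ d ∈ m.divisors, ((μ d : ℤ) : ℂ) * (if (m/d) ∣ n then ((m/d : ℕ) : ℂ) else 0) := by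
  have hm' : (m : ℂ) ≠ 0 := Nat.cast_ne_zero.mpr hm
  rw [ramanujanSum, Finset.sum_filter]
  have ind : ∀ b : ℕ, (if Nat.Coprime b m then eC ((b:ℂ) * n / m) else 0)
      = ∑ d ∈ m.divisors, (if d ∣ b then ((μ d : ℤ):ℂ) else 0) * eC ((b:ℂ) * n / m) := by
    intro b
    rw [← Finset.sum_mul, ← Finset.sum_filter]
    have hdiv : m.divisors.filter (fun d => d ∣ b) = (Nat.gcd b m).divisors := by
      ext d
      simp only [Finset.mem_filter, Nat.mem_divisors, Nat.dvd_gcd_iff]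
      constructor
      · rintro ⟨⟨h1, h2⟩, h3⟩; exact ⟨⟨h3, h1⟩, fun hg => hm (Nat.eq_zero_of_gcd_eq_zero_right hg)⟩
      · rintro ⟨⟨h1, h2⟩, _⟩; exact ⟨⟨h2, hm⟩, h1⟩
    rw [hdiv, musum _ (fun hg => hm (Nat.eq_zero_of_gcd_eq_zero_right hg))]
    unfold Nat.Coprime
    by_cases h : Nat.gcd b m = 1 <;> simp [h]
  simp_rw [ind]
  rw [Finset.sum_comm]
  refine Finset.sum_congr rfl ?_
  intro d hd
  obtain ⟨hdm, -⟩ := Nat.mem_divisors.mp hd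
  have hd0 : d ≠ 0 := by rintro rfl; exact hm (Nat.eq_zero_of_zero_dvd hdm)
  have hq0 : m / d ≠ 0 := Nat.div_ne_zero_iff.mpr ⟨hd0, Nat.le_of_dvd (Nat.pos_of_ne_zero hm) hdm⟩
  have hd' : (d : ℂ) ≠ 0 := Nat.cast_ne_zero.mpr hd0
  have hcast : ∀ c : ℕ, eC ((↑(d*c):ℂ) * n / m) = eC ((c:ℂ) * n / ↑(m/d)) := by
    intro c
    congr 1
    rw [Nat.cast_div hdm hd']
    push_cast
    field_simp
  calc ∑ b ∈ Finset.range m, (if d ∣ b then ((μ d : ℤ):ℂ) else 0) * eC ((b:ℂ) * n / m)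
      = ∑ b ∈ (Finset.range m).filter (fun b => d ∣ b), ((μ d : ℤ):ℂ) * eC ((b:ℂ) * n / m) := by
        simp_rw [ite_mul, zero_mul]
        rw [← Finset.sum_filter]
    _ = ((μ d : ℤ):ℂ) * ∑ b ∈ (Finset.range m).filter (fun b => d ∣ b), eC ((b:ℂ) * n / m) := by
        rw [Finset.mul_sum]
    _ = ((μ d : ℤ):ℂ) * ∑ c ∈ Finset.range (m/d), eC ((↑(d*c):ℂ) * n / m) := by
        rw [sum_range_filter_dvd d m hdm hd0]
    _ = ((μ d : ℤ):ℂ) * ∑ c ∈ Finset.range (m/d), eC ((c:ℂ) * n / ↑(m/d)) := by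
        simp_rw [hcast]
    _ = ((μ d : ℤ):ℂ) * (if (m/d) ∣ n then ((m/d : ℕ) : ℂ) else 0) := by
        rw [expsum (m/d) n hq0]

theorem stmt9 (r n : ℕ) (hr : 1 ≤ r) (hn : 1 ≤ n) :
    Summable (fun m : ℕ =>
      ‖ramanujanSum (m + 1) n / ((m + 1 : ℕ) : ℂ) ^ (r + 1)‖) ∧
    (sigma r n : ℂ) =
      riemannZeta ((r : ℂ) + 1) * (n : ℂ) ^ r *
        ∑' m : ℕ, ramanujanSum (m + 1) n / ((m + 1 : ℕ) : ℂ) ^ (r + 1) := by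
  have hn0 : n ≠ 0 := by omega
  set s : ℂ := (r : ℂ) + 1 with hs
  have hs_re : 1 < s.re := by
    simp only [hs, Complex.add_re, Complex.natCast_re, Complex.one_re]
    exact_mod_cast by omega
  set G : ℕ → ℂ := fun e => if e ∣ n then (e : ℂ) else 0 with hG
  -- the Ramanujan sums agree with the convolution ↗μ ⍟ G
  have hconv : (fun m => ramanujanSum m n) = ↗μ ⍟ G := by
    funext m
    rcases eq_or_ne m 0 with rfl | hm
    · simp [ramanujanSum]
    · rw [ramanujanSum_eq m n hm, LSeries.convolution_def]
      exact (Nat.sum_divisorsAntidiagonal (f := fun d e => ((μ d : ℤ) : ℂ) * G e)).symm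
  -- summability of the two factors
  have hμ : LSeriesSummable ↗μ s := LSeriesSummable_moebius_iff.mpr hs_re
  have hGsum : LSeriesSummable G s := by
    refine summable_of_ne_finset_zero (s := n.divisors) ?_
    intro e he
    rw [LSeries.term_def]
    rcases eq_or_ne e 0 with rfl | he0
    · simp
    · have : ¬ e ∣ n := fun hdvd => he (Nat.mem_divisors.mpr ⟨hdvd, hn0⟩)
      simp [hG, this, he0]
  have hcsum : LSeriesSummable (fun m => ramanujanSum m n) s := by
    rw [hconv]; exact hμ.convolution hGsum
  -- identify the tsum in the statement with the L-series
  have hterm : ∀ m : ℕ, LSeries.term (fun m => ramanujanSum m n) s (m + 1)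
      = ramanujanSum (m + 1) n / ((m + 1 : ℕ) : ℂ) ^ (r + 1) := by
    intro m
    rw [LSeries.term_of_ne_zero (Nat.succ_ne_zero m)]
    congr 1
    rw [hs, show ((r:ℂ) + 1) = ((r + 1 : ℕ) : ℂ) by push_cast; ring, Complex.cpow_natCast]
  constructor
  · -- summability part
    have h1 : Summable (fun m : ℕ => LSeries.term (fun m => ramanujanSum m n) s (m+1)) :=
      hcsum.comp_injective (add_left_injective 1)
    have h2 : Summable (fun m : ℕ => ramanujanSum (m + 1) n / ((m + 1 : ℕ) : ℂ) ^ (r + 1)) := by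
      rwa [← funext hterm]
    exact h2.norm
  · -- main identity
    have htsum : (∑' m : ℕ, ramanujanSum (m + 1) n / ((m + 1 : ℕ) : ℂ) ^ (r + 1))
        = LSeries (fun m => ramanujanSum m n) s := by
      rw [LSeries, Summable.tsum_eq_zero_add hcsum]
      simp only [LSeries.term_zero, zero_add]
      exact tsum_congr fun m => (hterm m).symm
    rw [htsum, hconv, LSeries_convolution' hμ hGsum]
    -- compute L G s
    have hLG : LSeries G s = ∑ e ∈ n.divisors, (e : ℂ) / (e : ℂ) ^ (r + 1) := by
      rw [LSeries]
      rw [tsum_eq_sum (s := n.divisors) ?_]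
      · refine Finset.sum_congr rfl fun e he => ?_
        obtain ⟨hed, -⟩ := Nat.mem_divisors.mp he
        have he0 : e ≠ 0 := fun h => hn0 (by simpa [h] using hed)
        rw [LSeries.term_of_ne_zero he0, hG]
        simp only [hed, if_pos]
        congr 1
        rw [hs, show ((r:ℂ) + 1) = ((r + 1 : ℕ) : ℂ) by push_cast; ring, Complex.cpow_natCast]
      · intro e he
        rcases eq_or_ne e 0 with rfl | he0
        · simp
        · have : ¬ e ∣ n := fun hdvd => he (Nat.mem_divisors.mpr ⟨hdvd, hn0⟩)
          rw [LSeries.term_of_ne_zero he0]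
          simp [hG, this]
    rw [hLG]
    -- use ζ(s) * L μ s = 1
    have hζμ : riemannZeta s * LSeries ↗μ s = 1 := by
      rw [← LSeries_zeta_eq_riemannZeta hs_re]
      exact LSeries_zeta_mul_Lseries_moebius hs_re
    -- final computation
    have hfin : (n : ℂ) ^ r * ∑ e ∈ n.divisors, (e : ℂ) / (e : ℂ) ^ (r + 1)
        = (sigma r n : ℂ) := by
      rw [Finset.mul_sum]
      have : ∀ e ∈ n.divisors, (n:ℂ)^r * ((e : ℂ) / (e : ℂ) ^ (r + 1)) = ((n/e : ℕ) : ℂ)^r := by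
        intro e he
        obtain ⟨hed, -⟩ := Nat.mem_divisors.mp he
        have he0 : e ≠ 0 := fun h => hn0 (by simpa [h] using hed)
        have he0' : (e : ℂ) ≠ 0 := Nat.cast_ne_zero.mpr he0
        rw [Nat.cast_div hed he0']
        rw [div_pow, pow_succ]
        field_simp
      rw [Finset.sum_congr rfl this]
      rw [show (sigma r n : ℂ) = ∑ d ∈ n.divisors, ((d:ℂ))^r by
        rw [sigma_apply]; push_cast; ring_nf]
      exact_mod_cast congrArg (Nat.cast : ℕ → ℂ) (Nat.sum_div_divisors n (fun d => d ^ r))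
    have hre : riemannZeta s * (n:ℂ)^r * (LSeries ↗μ s * ∑ e ∈ n.divisors, (e : ℂ) / (e : ℂ) ^ (r + 1))
        = (riemannZeta s * LSeries ↗μ s) * ((n:ℂ)^r * ∑ e ∈ n.divisors, (e : ℂ) / (e : ℂ) ^ (r + 1)) := by ring
    rw [hre, hζμ, one_mul, hfin]
end

section
/- Let k ≥ 1 be a fixed integer. There exists a positive constant ϱ depending only on k such that for all ξ > 0 and all real y: Σ_{n≥1} n^{k-1}·e^{-nξ}·(1 - cos(ny)) ≥ ϱ·( e^{-ξ}/(1-e^{-ξ})^k − e^{-ξ}/|1-e^{-ξ-iy}|^k ). -/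
lemma aux_choose_bound (k n : ℕ) (hk : 1 ≤ k) :
    (n + (k - 1)).choose (k - 1) ≤ (k - 1) ^ (k - 1) * (n + 1) ^ (k - 1) := by
  rcases Nat.eq_or_lt_of_le hk with h | h
  · simp [← h]
  · have hj : 1 ≤ k - 1 := by omega
    calc (n + (k - 1)).choose (k - 1) ≤ (n + (k - 1)) ^ (k - 1) := Nat.choose_le_pow _ _
      _ ≤ ((k - 1) * (n + 1)) ^ (k - 1) := Nat.pow_le_pow_left (by nlinarith) _
      _ = (k - 1) ^ (k - 1) * (n + 1) ^ (k - 1) := Nat.mul_pow _ _ _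

theorem stmt14 (k : ℕ) (hk : 1 ≤ k) :
    ∃ ϱ : ℝ, 0 < ϱ ∧ ∀ ξ : ℝ, 0 < ξ → ∀ y : ℝ,
      ϱ * (Real.exp (-ξ) / (1 - Real.exp (-ξ)) ^ k -
            Real.exp (-ξ) / ‖1 - Complex.exp (-(ξ + y * Complex.I))‖ ^ k) ≤
        ∑' n : ℕ, ((n + 1 : ℕ) : ℝ) ^ (k - 1) * Real.exp (-((n + 1 : ℕ) : ℝ) * ξ) *
          (1 - Real.cos (((n + 1 : ℕ) : ℝ) * y)) := by
  set c : ℕ := (k - 1) ^ (k - 1) with hc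
  have hc0 : 0 < (c : ℝ) := by
    have : 0 < c := by
      rcases Nat.eq_or_lt_of_le hk with h | h
      · simp [hc, ← h]
      · exact Nat.pow_pos (by omega)
    exact_mod_cast this
  refine ⟨(c : ℝ)⁻¹, by positivity, fun ξ hξ y => ?_⟩
  set q : ℝ := Real.exp (-ξ) with hqdef
  have hq0 : 0 < q := Real.exp_pos _
  have hq1 : q < 1 := Real.exp_lt_one_iff.mpr (by linarith)
  set w : ℂ := Complex.exp (-(ξ + y * Complex.I)) with hwdef
  have habs : ‖w‖ = q := by
    rw [hwdef, Complex.norm_exp]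
    norm_num
    exact hqdef.symm
  have hw1 : ‖w‖ < 1 := by rw [habs]; exact hq1
  have hwne : (1 : ℂ) - w ≠ 0 := by
    intro h
    have : w = 1 := by linear_combination -h
    rw [this] at hw1; simp at hw1
  have hk1 : k - 1 + 1 = k := by omega
  -- complex sum
  have hC : HasSum (fun n : ℕ => ((n + (k - 1)).choose (k - 1) : ℂ) * w ^ n)
      (1 / (1 - w) ^ k) := by
    have := hasSum_choose_mul_geometric_of_norm_lt_one (𝕜 := ℂ) (k - 1) hw1
    rwa [hk1] at this
  have hCw : HasSum (fun n : ℕ => ((n + (k - 1)).choose (k - 1) : ℂ) * w ^ (n + 1))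
      (1 / (1 - w) ^ k * w) := by
    have := hC.mul_right w
    convert this using 2 with n
    · rfl
    ring
  -- real part
  have hre : ∀ n : ℕ, (w ^ (n + 1)).re = q ^ (n + 1) * Real.cos ((n + 1 : ℕ) * y) := by
    intro n
    have : w ^ (n + 1) = Complex.exp (((n + 1 : ℕ) : ℂ) * (-(ξ + y * Complex.I))) := by
      rw [Complex.exp_nat_mul]
    rw [this, Complex.exp_re]
    have h1 : (((n + 1 : ℕ) : ℂ) * (-(ξ + y * Complex.I))).re = ((n + 1 : ℕ) : ℝ) * (-ξ) := by
      simp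
    have h2 : (((n + 1 : ℕ) : ℂ) * (-(ξ + y * Complex.I))).im = ((n + 1 : ℕ) : ℝ) * (-y) := by
      simp
    rw [h1, h2, mul_neg, mul_neg, Real.cos_neg, hqdef, ← Real.exp_nat_mul]
    ring_nf
  have hReSum : HasSum
      (fun n : ℕ => ((n + (k - 1)).choose (k - 1) : ℝ) * (q ^ (n + 1) * Real.cos ((n + 1 : ℕ) * y)))
      (1 / (1 - w) ^ k * w).re := by
    have := Complex.hasSum_re hCw
    convert this using 2 with n
    rw [← hre n]
    simp
  -- real geometric sum
  have hR : HasSum (fun n : ℕ => ((n + (k - 1)).choose (k - 1) : ℝ) * q ^ (n + 1))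
      (1 / (1 - q) ^ k * q) := by
    have := (hasSum_choose_mul_geometric_of_norm_lt_one (𝕜 := ℝ) (k - 1)
      (by rw [Real.norm_eq_abs, abs_of_pos hq0]; exact hq1)).mul_right q
    rw [hk1] at this
    convert this using 2 with n
    · rfl
    ring
  -- the difference sum
  set s : ℕ → ℝ := fun n =>
    ((n + (k - 1)).choose (k - 1) : ℝ) * q ^ (n + 1) * (1 - Real.cos ((n + 1 : ℕ) * y)) with hs
  have hS : HasSum s (1 / (1 - q) ^ k * q - (1 / (1 - w) ^ k * w).re) := by
    have := hR.sub hReSum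
    convert this using 2 with n
    · rfl
    rw [hs]; ring
  -- bound on Re part
  have hReLe : (1 / (1 - w) ^ k * w).re ≤ q / ‖1 - w‖ ^ k := by
    calc (1 / (1 - w) ^ k * w).re ≤ ‖1 / (1 - w) ^ k * w‖ := Complex.re_le_norm _
      _ = q / ‖1 - w‖ ^ k := by
          rw [norm_mul, norm_div, norm_pow, norm_one, habs]
          ring
  -- target sum terms
  set t : ℕ → ℝ := fun n =>
    ((n + 1 : ℕ) : ℝ) ^ (k - 1) * Real.exp (-((n + 1 : ℕ) : ℝ) * ξ) *
      (1 - Real.cos (((n + 1 : ℕ) : ℝ) * y)) with ht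
  have hexp : ∀ n : ℕ, Real.exp (-((n + 1 : ℕ) : ℝ) * ξ) = q ^ (n + 1) := by
    intro n
    rw [hqdef, ← Real.exp_nat_mul]
    ring_nf
  have hcos2 : ∀ x : ℝ, 0 ≤ 1 - Real.cos x := fun x => by
    have := Real.cos_le_one x; linarith
  have ht_nonneg : ∀ n, 0 ≤ t n := by
    intro n
    rw [ht]
    have := hcos2 (((n + 1 : ℕ) : ℝ) * y)
    positivity
  have htsummable : Summable t := by
    have hbase : Summable (fun n : ℕ => ((n : ℝ) ^ (k - 1) * q ^ n)) := by
      have := summable_pow_mul_geometric_of_norm_lt_one (R := ℝ) (k - 1)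
        (by rw [Real.norm_eq_abs, abs_of_pos hq0]; exact hq1)
      exact this
    have hshift : Summable (fun n : ℕ => (((n + 1 : ℕ) : ℝ) ^ (k - 1) * q ^ (n + 1))) := by
      exact_mod_cast (summable_nat_add_iff 1).2 hbase
    apply Summable.of_nonneg_of_le ht_nonneg (fun n => ?_) (hshift.mul_left 2)
    simp only [ht]
    rw [hexp n]
    have h1 : 1 - Real.cos (((n + 1 : ℕ) : ℝ) * y) ≤ 2 := by
      have := Real.neg_one_le_cos (((n + 1 : ℕ) : ℝ) * y); linarith
    have h2 : (0 : ℝ) ≤ ((n + 1 : ℕ) : ℝ) ^ (k - 1) * q ^ (n + 1) := by positivity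
    calc ((n + 1 : ℕ) : ℝ) ^ (k - 1) * q ^ (n + 1) * (1 - Real.cos (((n + 1 : ℕ) : ℝ) * y))
        ≤ ((n + 1 : ℕ) : ℝ) ^ (k - 1) * q ^ (n + 1) * 2 := by
          exact mul_le_mul_of_nonneg_left h1 h2
      _ = 2 * (((n + 1 : ℕ) : ℝ) ^ (k - 1) * q ^ (n + 1)) := by ring
  -- termwise bound : c⁻¹ * s n ≤ t n
  have hterm : ∀ n, (c : ℝ)⁻¹ * s n ≤ t n := by
    intro n
    simp only [hs, ht]
    rw [hexp n]
    set X := 1 - Real.cos (((n + 1 : ℕ) : ℝ) * y) with hXdef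
    set B := ((n + 1 : ℕ) : ℝ) ^ (k - 1) with hBdef
    set A := (((n + (k - 1)).choose (k - 1) : ℕ) : ℝ) with hAdef
    have hcne : (c : ℝ) ≠ 0 := ne_of_gt hc0
    have hchoose : A ≤ (c : ℝ) * B := by
      rw [hAdef, hBdef]
      exact_mod_cast aux_choose_bound k n hk
    have hXpos : 0 ≤ X := by rw [hXdef]; exact hcos2 _
    have key : A * q ^ (n + 1) * X ≤ (c : ℝ) * B * q ^ (n + 1) * X :=
      mul_le_mul_of_nonneg_right
        (mul_le_mul_of_nonneg_right hchoose (pow_nonneg hq0.le (n + 1))) hXpos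
    calc (c : ℝ)⁻¹ * (A * q ^ (n + 1) * X)
        ≤ (c : ℝ)⁻¹ * ((c : ℝ) * B * q ^ (n + 1) * X) :=
          mul_le_mul_of_nonneg_left key (by positivity)
      _ = ((c : ℝ)⁻¹ * (c : ℝ)) * (B * q ^ (n + 1) * X) := by ring
      _ = B * q ^ (n + 1) * X := by rw [inv_mul_cancel₀ hcne, one_mul]
  -- put it together
  have habs' : ‖1 - Complex.exp (-(↑ξ + ↑y * Complex.I))‖ = ‖1 - w‖ := rfl
  have step1 : q / (1 - q) ^ k - q / ‖1 - w‖ ^ k ≤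
      1 / (1 - q) ^ k * q - (1 / (1 - w) ^ k * w).re := by
    have : q / (1 - q) ^ k = 1 / (1 - q) ^ k * q := by ring
    rw [this]
    linarith [hReLe]
  have step2 : (c : ℝ)⁻¹ * (1 / (1 - q) ^ k * q - (1 / (1 - w) ^ k * w).re) ≤ ∑' n, t n := by
    rw [← hS.tsum_eq, ← tsum_mul_left]
    exact Summable.tsum_le_tsum hterm (hS.summable.mul_left _) htsummable
  calc (c : ℝ)⁻¹ * (q / (1 - q) ^ k - q / ‖1 - w‖ ^ k)
      ≤ (c : ℝ)⁻¹ * (1 / (1 - q) ^ k * q - (1 / (1 - w) ^ k * w).re) := by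
        apply mul_le_mul_of_nonneg_left step1 (by positivity)
    _ ≤ ∑' n, t n := step2
end
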